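/- For all x > 0, ψ'(x + 1/2) < (1/x) · (x^4 + (67/36)x^2 + 256/945) / (x^4 + (35/18)x^2 + 407/1008), where ψ' is the trigamma function. -/

import Mathlib

open Real Filter Topology Finset

/-- auxiliary: `a + j ≥ (min a 1 / 2) * (j+1)` for `a > 0`. -/
lemma aux_lb {a : ℝ} (ha : 0 < a) (j : ℕ) : min a 1 / 2 * (j + 1) ≤ a + j := by
  rcases Nat.eq_zero_or_pos j with rfl | hj
  · simp only [Nat.cast_zero, add_zero, zero_add, mul_one]
    have := min_le_left a 1
    linarith
  · have h1 : (1:ℝ) ≤ j := by exact_mod_cast hj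
    have := min_le_right a 1
    nlinarith [ha.le]

lemma summable_sq_base : Summable (fun j : ℕ => 1 / ((j:ℝ) + 1) ^ 2) := by
  have h := Real.summable_one_div_nat_pow.mpr (le_refl 2)
  have := (summable_nat_add_iff 1).mpr h
  refine this.congr fun n => ?_
  push_cast
  ring

lemma summable_inv_sq {a : ℝ} (ha : 0 < a) : Summable (fun j : ℕ => 1 / (a + j) ^ 2) := by
  set m := min a 1 with hm
  have hm0 : 0 < m := lt_min ha one_pos
  refine Summable.of_nonneg_of_le (fun j => by positivity)
    (fun j => ?_) (summable_sq_base.mul_left ((2/m)^2))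
  have hb := aux_lb ha j
  have hj1 : (0:ℝ) < (j:ℝ) + 1 := by positivity
  have haj : (0:ℝ) < a + j := by positivity
  have h2 : m / 2 * ((j:ℝ) + 1) ≤ a + j := hb
  have h3 : (m/2)^2 * ((j:ℝ)+1)^2 ≤ (a+j)^2 := by
    have h4 : 0 ≤ m / 2 * ((j:ℝ) + 1) := by positivity
    nlinarith [h2, h4]
  rw [div_le_iff₀ (by positivity)] at *
  calc (1:ℝ) = ((2/m)^2 * (1/((j:ℝ)+1)^2)) * ((m/2)^2 * ((j:ℝ)+1)^2) := by
        field_simp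
      _ ≤ ((2/m)^2 * (1/((j:ℝ)+1)^2)) * (a+j)^2 := by
        have : (0:ℝ) ≤ (2/m)^2 * (1/((j:ℝ)+1)^2) := by positivity
        nlinarith

/-- termwise difference `1/(j+1) - 1/(x+j)` -/
lemma c_eq {x : ℝ} (hx : 0 < x) (j : ℕ) :
    1 / ((j:ℝ) + 1) - 1 / (x + j) = (x - 1) / (((j:ℝ) + 1) * (x + j)) := by
  have h1 : ((j:ℝ) + 1) ≠ 0 := by positivity
  have h2 : (x + (j:ℝ)) ≠ 0 := by positivity
  field_simp
  ring

lemma summable_c {x : ℝ} (hx : 0 < x) :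
    Summable (fun j : ℕ => 1 / ((j:ℝ) + 1) - 1 / (x + j)) := by
  set m := min x 1 with hm
  have hm0 : 0 < m := lt_min hx one_pos
  refine Summable.of_norm ?_
  refine Summable.of_nonneg_of_le (fun j => norm_nonneg _)
    (fun j => ?_) (summable_sq_base.mul_left (|x - 1| * (2/m)))
  rw [c_eq hx j]
  have hj1 : (0:ℝ) < (j:ℝ) + 1 := by positivity
  have haj : (0:ℝ) < x + j := by positivity
  rw [Real.norm_eq_abs, abs_div, abs_of_pos (by positivity : (0:ℝ) < ((j:ℝ)+1)*(x+j))]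
  have hb : m / 2 * ((j:ℝ) + 1) ≤ x + j := aux_lb hx j
  have key : ((j:ℝ)+1) * (m/2 * ((j:ℝ)+1)) ≤ ((j:ℝ)+1) * (x+j) := by nlinarith
  calc |x - 1| / (((j:ℝ) + 1) * (x + j))
      ≤ |x - 1| / (((j:ℝ)+1) * (m/2 * ((j:ℝ)+1))) := by
        apply div_le_div_of_nonneg_left (abs_nonneg _) (by positivity) key
    _ = |x - 1| * (2/m) * (1/((j:ℝ)+1)^2) := by
        rw [div_eq_iff (by positivity)]
        field_simp

noncomputable def psiAux (x : ℝ) : ℝ := ∑' j : ℕ, (1 / ((j:ℝ) + 1) - 1 / (x + j))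

noncomputable def psiR (x : ℝ) : ℝ := -Real.eulerMascheroniConstant + psiAux x

noncomputable def triSum (x : ℝ) : ℝ := ∑' j : ℕ, 1 / (x + j) ^ 2

lemma psiAux_hasDerivAt {y : ℝ} (hy : 0 < y) : HasDerivAt psiAux (triSum y) y := by
  set s : Set ℝ := Set.Ioi (y / 2) with hs
  have hys : y ∈ s := by simp [hs]; linarith
  refine hasDerivAt_of_tendstoUniformlyOn (l := atTop) (f := fun n x => ∑ j ∈ range n, (1 / ((j:ℝ) + 1) - 1 / (x + j)))
    (f' := fun n x => ∑ j ∈ range n, 1 / (x + j) ^ 2) isOpen_Ioi ?_ ?_ ?_ hys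
  · -- uniform convergence of derivatives
    refine tendstoUniformlyOn_tsum_nat (f := fun (j : ℕ) (x : ℝ) => 1 / (x + j) ^ 2)
      (u := fun j => 1 / (y/2 + j) ^ 2) (s := s) (summable_inv_sq (by linarith)) ?_
    intro j x hxs
    · have hx2 : y / 2 < x := hxs
      have h1 : (0:ℝ) < y/2 + j := by positivity
      have h2 : (0:ℝ) < x + j := by linarith
      rw [Real.norm_eq_abs, abs_of_pos (by positivity)]
      have hsq : (y/2+(j:ℝ))^2 ≤ (x+j)^2 := by nlinarith
      exact one_div_le_one_div_of_le (by positivity) hsq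
  · -- derivatives
    filter_upwards with n
    intro x hxs
    have hx : 0 < x := lt_trans (by linarith) hxs
    apply HasDerivAt.fun_sum
    intro j _
    have hne : x + (j:ℝ) ≠ 0 := by positivity
    have h1 : HasDerivAt (fun x : ℝ => x + (j:ℝ)) 1 x := (hasDerivAt_id x).add_const _
    have h2 := h1.inv hne
    have h3 := h2.const_sub (1 / ((j:ℝ) + 1))
    convert h3.congr_deriv ?_ using 1
    · ext t; rw [one_div, one_div]; rfl
    · field_simp
  · -- pointwise convergence
    intro x hxs
    have hx : 0 < x := lt_trans (by linarith) hxs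
    exact (summable_c hx).hasSum.tendsto_sum_nat

lemma harmonic_cast_real (n : ℕ) :
    (harmonic n : ℝ) = ∑ j ∈ range n, 1 / ((j:ℝ) + 1) := by
  rw [harmonic]
  push_cast
  simp [one_div]

lemma tendsto_A : Tendsto (fun n : ℕ => Real.log n - ∑ j ∈ range (n+1), 1 / ((j:ℝ) + 1))
    atTop (𝓝 (-Real.eulerMascheroniConstant)) := by
  have h1 : Tendsto (fun n : ℕ => -Real.eulerMascheroniSeq' (n+1)) atTop
      (𝓝 (-Real.eulerMascheroniConstant)) :=
    (Real.tendsto_eulerMascheroniSeq'.comp (tendsto_add_atTop_nat 1)).neg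
  have h2 : Tendsto (fun n : ℕ => Real.log (n+1) - Real.log n) atTop (𝓝 0) :=
    Real.tendsto_log_nat_add_one_sub_log
  have h3 := h1.sub h2
  rw [sub_zero] at h3
  refine h3.congr fun n => ?_
  have hne : n + 1 ≠ 0 := Nat.succ_ne_zero n
  rw [Real.eulerMascheroniSeq', if_neg hne, harmonic_cast_real]
  push_cast
  ring

lemma logGamma_hasDerivAt {y : ℝ} (hy : 0 < y) :
    HasDerivAt (fun x : ℝ => Real.log (Real.Gamma x)) (psiR y) y := by
  set s : Set ℝ := Set.Ioo (y/2) (y+1) with hs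
  have hys : y ∈ s := ⟨by linarith, by linarith⟩
  set m : ℝ := min (y/2) 1 with hm
  have hm0 : 0 < m := lt_min (by linarith) one_pos
  refine hasDerivAt_of_tendstoUniformlyOn (l := atTop)
    (f := fun (n:ℕ) (x:ℝ) => x * Real.log n + Real.log (Nat.factorial n) - ∑ j ∈ range (n+1), Real.log (x + j))
    (f' := fun (n:ℕ) (x:ℝ) => Real.log n - ∑ j ∈ range (n+1), 1 / (x + j))
    isOpen_Ioo ?_ ?_ ?_ hys
  · -- uniform convergence of derivatives
    have hAu : TendstoUniformlyOn
        (fun (n:ℕ) (_:ℝ) => Real.log n - ∑ j ∈ range (n+1), 1 / ((j:ℝ) + 1))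
        (fun _ => -Real.eulerMascheroniConstant) atTop s := by
      rw [Metric.tendstoUniformlyOn_iff]
      intro ε hε
      filter_upwards [Metric.tendsto_nhds.mp tendsto_A ε hε] with n hn x _
      rw [dist_comm] at hn
      exact hn
    have hB : TendstoUniformlyOn
        (fun (n:ℕ) (x:ℝ) => ∑ j ∈ range n, (1 / ((j:ℝ) + 1) - 1 / (x + j)))
        psiAux atTop s := by
      refine tendstoUniformlyOn_tsum_nat (f := fun (j:ℕ) (x:ℝ) => 1 / ((j:ℝ) + 1) - 1 / (x + j))
        (u := fun j => (y+2) * (2/m) * (1/((j:ℝ)+1)^2)) (s := s)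
        ((summable_sq_base.mul_left _)) ?_
      intro j x hx
      obtain ⟨hx1, hx2⟩ := hx
      have hx0 : 0 < x := by linarith
      have hj1 : (0:ℝ) < (j:ℝ) + 1 := by positivity
      have haj : (0:ℝ) < x + j := by positivity
      show ‖1 / ((j:ℝ) + 1) - 1 / (x + j)‖ ≤ (y+2) * (2/m) * (1/((j:ℝ)+1)^2)
      rw [c_eq hx0 j, Real.norm_eq_abs, abs_div,
        abs_of_pos (by positivity : (0:ℝ) < ((j:ℝ)+1)*(x+j))]
      have hnum : |x - 1| ≤ y + 2 := by
        rw [abs_le]; constructor <;> nlinarith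
      have hb : m / 2 * ((j:ℝ) + 1) ≤ y/2 + j := aux_lb (by linarith) j
      have hden : ((j:ℝ)+1) * (m/2 * ((j:ℝ)+1)) ≤ ((j:ℝ)+1) * (x+j) := by nlinarith
      calc |x - 1| / (((j:ℝ) + 1) * (x + j))
          ≤ (y+2) / (((j:ℝ)+1) * (m/2 * ((j:ℝ)+1))) := by
            apply div_le_div₀ (by linarith) hnum (by positivity) hden
        _ = (y+2) * (2/m) * (1/((j:ℝ)+1)^2) := by
            rw [div_eq_iff (by positivity)]
            field_simp
    have hB' : TendstoUniformlyOn
        (fun (n:ℕ) (x:ℝ) => ∑ j ∈ range (n+1), (1 / ((j:ℝ) + 1) - 1 / (x + j)))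
        psiAux atTop s := fun u hu => (tendsto_add_atTop_nat 1).eventually (hB u hu)
    have := hAu.add hB'
    refine this.congr ?_
    filter_upwards with n
    intro x _
    simp only [Pi.add_apply, Finset.sum_sub_distrib]
    ring
  · -- derivatives
    filter_upwards with n
    intro x hx
    have hx0 : 0 < x := by have := hx.1; linarith
    have h1 : HasDerivAt (fun x : ℝ => x * Real.log n + Real.log (Nat.factorial n))
        (Real.log n) x := (hasDerivAt_mul_const _).add_const _
    have h2 : HasDerivAt (fun x : ℝ => ∑ j ∈ range (n+1), Real.log (x + j))
        (∑ j ∈ range (n+1), 1 / (x + j)) x := by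
      apply HasDerivAt.fun_sum
      intro j _
      have hne : x + (j:ℝ) ≠ 0 := by positivity
      have := (((hasDerivAt_id x).add_const (j:ℝ)).log hne)
      simpa [one_div] using this
    exact h1.sub h2
  · -- pointwise convergence
    intro x hx
    have hx0 : 0 < x := by have := hx.1; linarith
    have hmain : Tendsto (fun n => Real.log (Real.GammaSeq x n)) atTop
        (𝓝 (Real.log (Real.Gamma x))) :=
      ((Real.continuousAt_log (Real.Gamma_pos_of_pos hx0).ne').tendsto).comp
        (Real.GammaSeq_tendsto_Gamma x)
    refine hmain.congr' ?_
    filter_upwards [eventually_ge_atTop 1] with n hn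
    have hn0 : (0:ℝ) < n := by exact_mod_cast hn
    have hprod : (0:ℝ) < ∏ j ∈ range (n+1), (x + (j:ℝ)) :=
      Finset.prod_pos fun j _ => by positivity
    have hfac : (0:ℝ) < (Nat.factorial n : ℝ) := by exact_mod_cast n.factorial_pos
    rw [Real.GammaSeq, Real.log_div (by positivity) hprod.ne',
      Real.log_mul (by positivity) hfac.ne', Real.log_rpow hn0,
      Real.log_prod (fun j _ => by positivity)]

/-- The trigamma function, the second derivative of `log ∘ Γ`. -/
noncomputable def trigamma (x : ℝ) : ℝ :=
  deriv (deriv (fun y : ℝ => Real.log (Real.Gamma y))) x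

lemma trigamma_eq {y : ℝ} (hy : 0 < y) : trigamma y = triSum y := by
  have hev : deriv (fun x : ℝ => Real.log (Real.Gamma x)) =ᶠ[𝓝 y] psiR := by
    filter_upwards [isOpen_Ioi.mem_nhds (show y ∈ Set.Ioi (0:ℝ) from hy)] with z hz
    exact (logGamma_hasDerivAt hz).deriv
  rw [trigamma, hev.deriv_eq]
  have h2 : HasDerivAt psiR (triSum y) y := by
    unfold psiR
    exact (psiAux_hasDerivAt hy).const_add _
  exact h2.deriv

noncomputable def Fc (t : ℝ) : ℝ :=
  (t^4 + 67/36*t^2 + 256/945) / (t * (t^4 + 35/18*t^2 + 407/1008))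

lemma key_lt {t : ℝ} (ht : 0 < t) : 1/(t+1/2)^2 < Fc t - Fc (t+1) := by
  have hD1 : (0:ℝ) < t^4 + 35/18*t^2 + 407/1008 := by positivity
  have hD2 : (0:ℝ) < (t+1)^4 + 35/18*(t+1)^2 + 407/1008 := by positivity
  have hkey : Fc t - Fc (t+1) = 1/(t+1/2)^2 +
      (100/441) / ((t*(t^4+35/18*t^2+407/1008)) *
        ((t+1)*((t+1)^4+35/18*(t+1)^2+407/1008)) * (t+1/2)^2) := by
    unfold Fc
    rw [div_add_div _ _ (by positivity) (by positivity), div_sub_div _ _ (by positivity) (by positivity),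
      div_eq_div_iff (by positivity) (by positivity)]
    ring
  rw [hkey]
  have hpos : (0:ℝ) < (100/441) / ((t*(t^4+35/18*t^2+407/1008)) *
      ((t+1)*((t+1)^4+35/18*(t+1)^2+407/1008)) * (t+1/2)^2) := by positivity
  linarith

lemma Fc_nonneg {t : ℝ} (ht : 0 < t) : 0 ≤ Fc t := by
  unfold Fc; positivity

lemma Fc_le {t : ℝ} (ht : 1 ≤ t) : Fc t ≤ 4 / t := by
  have ht0 : 0 < t := by linarith
  unfold Fc
  rw [div_le_div_iff₀ (by positivity) ht0]
  nlinarith [sq_nonneg t, sq_nonneg (t^2), pow_pos ht0 2, pow_pos ht0 4]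

lemma tendsto_Fc {x : ℝ} (hx : 0 < x) :
    Tendsto (fun n : ℕ => Fc (x + n)) atTop (𝓝 0) := by
  have hxn : Tendsto (fun n : ℕ => x + (n:ℝ)) atTop atTop :=
    tendsto_atTop_add_const_left _ x tendsto_natCast_atTop_atTop
  have hg : Tendsto (fun n : ℕ => 4 / (x + (n:ℝ))) atTop (𝓝 0) :=
    Tendsto.div_atTop tendsto_const_nhds hxn
  refine squeeze_zero' ?_ ?_ hg
  · filter_upwards with n
    exact Fc_nonneg (by positivity)
  · filter_upwards [hxn.eventually_ge_atTop 1] with n hn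
    exact Fc_le hn

lemma hasSum_tele {x : ℝ} (hx : 0 < x) :
    HasSum (fun j : ℕ => Fc (x+j) - Fc (x+j+1)) (Fc x) := by
  have hnn : ∀ j : ℕ, 0 ≤ Fc (x+j) - Fc (x+j+1) := by
    intro j
    have h1 : (0:ℝ) < 1/((x+j)+1/2)^2 := by positivity
    have := key_lt (t := x+j) (by positivity)
    linarith
  rw [hasSum_iff_tendsto_nat_of_nonneg hnn]
  have hts : Tendsto (fun n : ℕ => Fc x - Fc (x + n)) atTop (𝓝 (Fc x)) := by
    have := tendsto_const_nhds (x := Fc x) (f := atTop (α := ℕ)) |>.sub (tendsto_Fc hx)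
    simpa using this
  refine hts.congr fun n => ?_
  rw [eq_comm]
  have := Finset.sum_range_sub' (fun j : ℕ => Fc (x + j)) n
  simp only [Nat.cast_zero, add_zero, Nat.cast_add, Nat.cast_one] at this ⊢
  rw [← this]
  apply Finset.sum_congr rfl
  intro j _
  push_cast
  ring_nf

theorem trigamma_upper_bound (x : ℝ) (hx : 0 < x) :
    trigamma (x + 1 / 2) <
      (1 / x) * (x ^ 4 + (67 / 36) * x ^ 2 + 256 / 945) /
        (x ^ 4 + (35 / 18) * x ^ 2 + 407 / 1008) := by
  have h05 : (0:ℝ) < x + 1/2 := by linarith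
  have heq : (1 / x) * (x ^ 4 + (67 / 36) * x ^ 2 + 256 / 945) /
      (x ^ 4 + (35 / 18) * x ^ 2 + 407 / 1008) = Fc x := by
    unfold Fc
    rw [one_div_mul_eq_div, div_div]
  rw [trigamma_eq h05, heq]
  have htele := hasSum_tele hx
  have hsum1 : Summable (fun j : ℕ => 1/((x+1/2)+j)^2) := summable_inv_sq h05
  rw [triSum, ← htele.tsum_eq]
  refine Summable.tsum_lt_tsum (i := 0) (fun j => ?_) ?_ hsum1 htele.summable
  · have hk := key_lt (t := x + j) (by positivity)
    have hre : ((x+1/2)+(j:ℝ)) = (x+(j:ℝ))+1/2 := by ring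
    rw [hre]
    exact le_of_lt hk
  · have hk := key_lt (t := x) hx
    simpa using hk
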